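/- Let 𝒟 = [n_1] × … × [n_d] be a d-dimensional grid graph (all n_i ≥ 2) and let V ≥ 1. The number of sensing regions of 𝒟 with sensing range V (i.e., the number of equivalence classes of the relation p ∼ p' ⇔ S_V(p) = S_V(p')) equals ∏_{i=1}^{d} min(n_i, 2V + 1). -/

import Mathlib

open Finset

/-- Manhattan (ℓ¹) norm of an integer vector. -/
def manhattan {d : ℕ} (p : Fin d → ℤ) : ℤ := ∑ i, |p i|

/-- The grid graph vertex set `[n 0] × ⋯ × [n (d-1)]`. -/
def grid {d : ℕ} (n : Fin d → ℕ) : Set (Fin d → ℤ) :=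
  {p | ∀ i, 1 ≤ p i ∧ p i ≤ (n i : ℤ)}

/-- Sensing data `S_V(p)`: relative positions of points of `D` within
Manhattan distance `V` of `p`. -/
def sense {d : ℕ} (D : Set (Fin d → ℤ)) (V : ℕ) (p : Fin d → ℤ) : Set (Fin d → ℤ) :=
  {q | p + q ∈ D ∧ manhattan q ≤ (V : ℤ)}

/-- A deterministic agent algorithm with `b` bits of memory: maps sensing data and a
memory state to a step and a new memory state. -/
structure Agent (d b : ℕ) where
  act : Set (Fin d → ℤ) → (Fin b → Bool) → (Fin d → ℤ) × (Fin b → Bool)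

namespace Agent

/-- Validity: at every vertex of `D`, in every memory state, the chosen step is a
unit step leading to a vertex of `D`. -/
def Valid {d b : ℕ} (A : Agent d b) (D : Set (Fin d → ℤ)) (V : ℕ) : Prop :=
  ∀ p ∈ D, ∀ m, manhattan (A.act (sense D V p) m).1 = 1 ∧
    (A.act (sense D V p) m).1 ∈ sense D V p

/-- The trajectory (position, memory) of the agent after `t` steps, starting from
position `v` and memory state `m`. -/
def traj {d b : ℕ} (A : Agent d b) (D : Set (Fin d → ℤ)) (V : ℕ)
    (v : Fin d → ℤ) (m : Fin b → Bool) : ℕ → (Fin d → ℤ) × (Fin b → Bool)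
  | 0 => (v, m)
  | t + 1 =>
      let s := Agent.traj A D V v m t
      (s.1 + (A.act (sense D V s.1) s.2).1, (A.act (sense D V s.1) s.2).2)

/-- The agent patrols `D`: it is valid, and from any initial position in `D` and any
initial memory state, its trajectory visits every vertex of `D` within finitely many
steps. -/
def Patrols {d b : ℕ} (A : Agent d b) (D : Set (Fin d → ℤ)) (V : ℕ) : Prop :=
  A.Valid D V ∧ ∀ v₁ ∈ D, ∀ m, ∀ v ∈ D, ∃ t, (A.traj D V v₁ m t).1 = v

end Agent

/-- The graph on a set of integer vectors with edges between points at Manhattan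
distance 1. -/
def latticeGraph {d : ℕ} (S : Set (Fin d → ℤ)) : SimpleGraph S where
  Adj p q := manhattan (p.1 - q.1) = 1
  symm := by
    constructor
    intro p q h
    simp only [manhattan, Pi.sub_apply] at h ⊢
    simpa [abs_sub_comm] using h
  loopless := by
    constructor
    intro p h
    simp [manhattan] at h

/-- The `d`-dimensional grid graph `[n 0] × ⋯ × [n (d-1)]`. -/
def gridGraph {d : ℕ} (n : Fin d → ℕ) : SimpleGraph (grid n) :=
  latticeGraph (grid n)

section Aux
variable {d : ℕ}

lemma abs_apply_le_manhattan (q : Fin d → ℤ) (i : Fin d) : |q i| ≤ manhattan q :=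
  Finset.single_le_sum (fun j _ => abs_nonneg (q j)) (Finset.mem_univ i)

def sigp (n : Fin d → ℕ) (V : ℕ) (p : Fin d → ℤ) : Fin d → ℤ × ℤ :=
  fun i => (min (p i - 1) (V : ℤ), min ((n i : ℤ) - p i) (V : ℤ))

def box (V : ℕ) (σ : Fin d → ℤ × ℤ) : Set (Fin d → ℤ) :=
  {q | manhattan q ≤ (V : ℤ) ∧ ∀ i, -(σ i).1 ≤ q i ∧ q i ≤ (σ i).2}

lemma sense_eq_box {n : Fin d → ℕ} {V : ℕ} {p : Fin d → ℤ} (hp : p ∈ grid n) :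
    sense (grid n) V p = box V (sigp n V p) := by
  unfold sense _root_.box grid sigp
  ext q
  simp only [Set.mem_setOf_eq, Pi.add_apply]
  constructor
  · rintro ⟨hq1, hq2⟩
    refine ⟨hq2, fun i => ?_⟩
    have h1 := hq1 i
    have h2 := hp i
    have h4 : -(V:ℤ) ≤ q i ∧ q i ≤ V := abs_le.mp ((abs_apply_le_manhattan q i).trans hq2)
    omega
  · rintro ⟨hq2, hq1⟩
    refine ⟨fun i => ?_, hq2⟩
    have h1 := hq1 i
    have h2 := hp i
    omega

lemma manhattan_single (i : Fin d) (c : ℤ) : manhattan (Pi.single i c) = |c| := by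
  unfold manhattan
  rw [Finset.sum_eq_single i]
  · simp
  · intro j _ hj
    simp [Pi.single_apply, hj]
  · simp

lemma box_subset_le {V : ℕ} {σ σ' : Fin d → ℤ × ℤ}
    (hσ : ∀ i, 0 ≤ (σ i).1 ∧ (σ i).1 ≤ V ∧ 0 ≤ (σ i).2 ∧ (σ i).2 ≤ V)
    (h : box V σ ⊆ box V σ') (i : Fin d) :
    (σ i).1 ≤ (σ' i).1 ∧ (σ i).2 ≤ (σ' i).2 := by
  constructor
  · have hq : (Pi.single i (-(σ i).1) : Fin d → ℤ) ∈ box V σ := by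
      refine ⟨?_, fun j => ?_⟩
      · rw [manhattan_single]
        have := hσ i
        rw [abs_of_nonpos (by omega)]
        omega
      · rcases eq_or_ne j i with rfl | hji
        · simp only [Pi.single_eq_same]
          have := hσ j
          omega
        · simp only [Pi.single_eq_of_ne hji]
          have := hσ j
          omega
    have := (h hq).2 i
    simp only [Pi.single_eq_same] at this
    omega
  · have hq : (Pi.single i ((σ i).2) : Fin d → ℤ) ∈ box V σ := by
      refine ⟨?_, fun j => ?_⟩
      · rw [manhattan_single]
        have := hσ i
        rw [abs_of_nonneg (by omega)]
        omega
      · rcases eq_or_ne j i with rfl | hji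
        · simp only [Pi.single_eq_same]
          have := hσ j
          omega
        · simp only [Pi.single_eq_of_ne hji]
          have := hσ j
          omega
    have := (h hq).2 i
    simp only [Pi.single_eq_same] at this
    omega

lemma box_inj {V : ℕ} {σ σ' : Fin d → ℤ × ℤ}
    (hσ : ∀ i, 0 ≤ (σ i).1 ∧ (σ i).1 ≤ V ∧ 0 ≤ (σ i).2 ∧ (σ i).2 ≤ V)
    (hσ' : ∀ i, 0 ≤ (σ' i).1 ∧ (σ' i).1 ≤ V ∧ 0 ≤ (σ' i).2 ∧ (σ' i).2 ≤ V)
    (h : box V σ = box V σ') : σ = σ' := by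
  funext i
  have h1 := box_subset_le hσ h.le i
  have h2 := box_subset_le hσ' h.ge i
  exact Prod.ext (le_antisymm h1.1 h2.1) (le_antisymm h1.2 h2.2)

lemma oneD (N : ℤ) (hN : 2 ≤ N) (V : ℕ) :
    Set.ncard ((fun t : ℤ => (min (t-1) (V:ℤ), min (N - t) (V:ℤ))) '' Set.Icc 1 N)
      = min N.toNat (2*V+1) := by
  set g := fun t : ℤ => (min (t-1) (V:ℤ), min (N - t) (V:ℤ)) with hg
  set R : Finset ℤ := Finset.Icc 1 N ∩ (Finset.Icc 1 ((V:ℤ)+1) ∪ Finset.Icc (N-V+1) N) with hR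
  have himg : g '' Set.Icc 1 N = g '' (R : Set ℤ) := by
    apply Set.Subset.antisymm
    · rintro x ⟨t, ht, rfl⟩
      rcases Set.mem_Icc.mp ht with ⟨ht1, ht2⟩
      by_cases h1 : t ≤ (V:ℤ)+1 ∨ N - (V:ℤ) + 1 ≤ t
      · refine ⟨t, ?_, rfl⟩
        simp only [hR, Finset.coe_inter, Finset.coe_union, Finset.coe_Icc, Set.mem_inter_iff,
          Set.mem_union, Set.mem_Icc]
        omega
      · push_neg at h1
        refine ⟨(V:ℤ)+1, ?_, ?_⟩
        · simp only [hR, Finset.coe_inter, Finset.coe_union, Finset.coe_Icc, Set.mem_inter_iff,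
            Set.mem_union, Set.mem_Icc]
          omega
        · simp only [hg, Prod.mk.injEq]
          constructor <;> omega
    · apply Set.image_mono
      intro t ht
      simp only [hR, Finset.coe_inter, Finset.coe_union, Finset.coe_Icc, Set.mem_inter_iff,
        Set.mem_union, Set.mem_Icc] at ht
      exact Set.mem_Icc.mpr ⟨ht.1.1, ht.1.2⟩
  have hinj : Set.InjOn g (R : Set ℤ) := by
    intro t ht t' ht' h
    simp only [hR, Finset.coe_inter, Finset.coe_union, Finset.coe_Icc, Set.mem_inter_iff,
      Set.mem_union, Set.mem_Icc] at ht ht'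
    simp only [hg, Prod.mk.injEq] at h
    omega
  rw [himg, Set.ncard_image_of_injOn hinj, Set.ncard_coe_finset]
  by_cases hcase : N ≤ 2*(V:ℤ)+1
  · have hRe : R = Finset.Icc 1 N := by
      ext t
      simp only [hR, Finset.mem_inter, Finset.mem_union, Finset.mem_Icc]
      omega
    rw [hRe, Int.card_Icc]
    omega
  · have hRe : R = Finset.Icc 1 ((V:ℤ)+1) ∪ Finset.Icc (N-V+1) N := by
      ext t
      simp only [hR, Finset.mem_inter, Finset.mem_union, Finset.mem_Icc]
      omega
    rw [hRe, Finset.card_union_of_disjoint, Int.card_Icc, Int.card_Icc]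
    · omega
    · rw [Finset.disjoint_left]
      intro t ht ht'
      simp only [Finset.mem_Icc] at ht ht'
      omega

end Aux

/-- The number of sensing regions of `𝒟 = [n 0] × ⋯ × [n (d-1)]` with
sensing range `V` (equivalently, the number of distinct sensing data values attained
on `𝒟`) equals `∏ i, min (n i) (2V + 1)`. -/


theorem card_sensing_regions {d : ℕ} (hd : 1 ≤ d) (n : Fin d → ℕ)
    (hn : ∀ i, 2 ≤ n i) (V : ℕ) (hV : 1 ≤ V) :
    Set.ncard {S : Set (Fin d → ℤ) | ∃ p ∈ grid n, S = sense (grid n) V p} =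
      ∏ i, min (n i) (2 * V + 1) := by
  classical
  have hbounds : ∀ p ∈ grid n, ∀ i, 0 ≤ (sigp n V p i).1 ∧ (sigp n V p i).1 ≤ V ∧
      0 ≤ (sigp n V p i).2 ∧ (sigp n V p i).2 ≤ V := by
    intro p hp i
    have := hp i
    simp only [sigp]
    omega
  have key : {S : Set (Fin d → ℤ) | ∃ p ∈ grid n, S = sense (grid n) V p}
      = _root_.box V '' (sigp n V '' grid n) := by
    ext S
    simp only [Set.mem_setOf_eq, Set.mem_image]
    constructor
    · rintro ⟨p, hp, rfl⟩
      exact ⟨sigp n V p, ⟨p, hp, rfl⟩, (sense_eq_box hp).symm⟩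
    · rintro ⟨σ, ⟨p, hp, rfl⟩, rfl⟩
      exact ⟨p, hp, (sense_eq_box hp).symm⟩
  have hinj : Set.InjOn (_root_.box V) (sigp n V '' grid n) := by
    rintro σ ⟨p, hp, rfl⟩ σ' ⟨p', hp', rfl⟩ h
    exact box_inj (hbounds p hp) (hbounds p' hp') h
  rw [key, Set.ncard_image_of_injOn hinj]
  have himg : sigp n V '' grid n = Set.pi Set.univ
      (fun i => (fun t : ℤ => (min (t-1) (V:ℤ), min ((n i : ℤ) - t) (V:ℤ))) ''
        Set.Icc 1 (n i : ℤ)) := by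
    ext σ
    simp only [Set.mem_image, Set.mem_pi, Set.mem_univ, true_implies]
    constructor
    · rintro ⟨p, hp, rfl⟩ i
      exact ⟨p i, Set.mem_Icc.mpr ⟨(hp i).1, (hp i).2⟩, rfl⟩
    · intro h
      choose p hp hσ using h
      exact ⟨p, fun i => Set.mem_Icc.mp (hp i), funext fun i => (hσ i).symm ▸ rfl⟩
  have hpi : ∀ (T : Fin d → Set (ℤ × ℤ)), (Set.pi Set.univ T).ncard = ∏ i, (T i).ncard := by
    intro T
    rw [← Nat.card_coe_set_eq, Nat.card_congr (Equiv.Set.univPi T), Nat.card_pi]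
    exact Finset.prod_congr rfl fun i _ => Nat.card_coe_set_eq _
  rw [himg, hpi]
  refine Finset.prod_congr rfl fun i _ => ?_
  rw [oneD ((n i : ℤ)) (by exact_mod_cast hn i) V]
  simp
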